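/- For 0 ≤ h, j ≤ D the following are equivalent: (i) |h − j| ≠ 1; (ii) E_h A^ε E_j = 0; (iii) E*_h A^ε E*_j = 0; (iv) E^ε_h A E^ε_j = 0; (v) E^ε_h A* E^ε_j = 0. -/
import Mathlib


noncomputable section

open Matrix Finset

/-- Vertex set of the hypercube `Q_D`: binary strings of length `D`. -/
abbrev Vtx (D : ℕ) := Fin D → Bool

/-- Hamming weight of a vertex, i.e. its distance to the fixed vertex `x = (0,...,0)`. -/
def wt {D : ℕ} (y : Vtx D) : ℕ := (Finset.univ.filter fun k => y k = true).card

/-- The adjacency matrix of the hypercube `Q_D`: `A_{yz} = 1` iff `y,z` differ in exactly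
one coordinate. -/
def adjMat (D : ℕ) : Matrix (Vtx D) (Vtx D) ℂ :=
  fun y z => if (Finset.univ.filter fun k => y k ≠ z k).card = 1 then 1 else 0

/-- The dual adjacency matrix of `Q_D` with respect to `x = (0,...,0)`: the diagonal
matrix with `(y,y)`-entry `D - 2·wt(y)`. -/
def dualAdjMat (D : ℕ) : Matrix (Vtx D) (Vtx D) ℂ :=
  Matrix.diagonal fun y => (D : ℂ) - 2 * (wt y : ℂ)

/-- The imaginary adjacency matrix `Aᵉ = -i(AA* - A*A)/2`. -/
def imagAdjMat (D : ℕ) : Matrix (Vtx D) (Vtx D) ℂ :=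
  (-Complex.I / 2) • (adjMat D * dualAdjMat D - dualAdjMat D * adjMat D)

/-- The 2×2 matrix `P₁` with entries `(P₁)₀₀ = 1`, `(P₁)₀₁ = 1`, `(P₁)₁₀ = -i`,
`(P₁)₁₁ = i`. -/
def P1 : Bool → Bool → ℂ
  | false, false => 1
  | false, true  => 1
  | true,  false => -Complex.I
  | true,  true  => Complex.I

/-- The D-fold Kronecker power `P = P₁^{⊗D}`, i.e. `P_{yz} = ∏_k (P₁)_{y_k z_k}`. -/
def Pmat (D : ℕ) : Matrix (Vtx D) (Vtx D) ℂ :=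
  fun y z => ∏ k : Fin D, P1 (y k) (z k)

/-- The eigenvalues `θ_j = D - 2j`. -/
def theta (D j : ℕ) : ℂ := (D : ℂ) - 2 * (j : ℂ)

/-- The `i`-th primitive idempotent `E_i = ∏_{0 ≤ j ≤ D, j ≠ i} (A - θ_j I)/(θ_i - θ_j)`. -/
def Emat (D i : ℕ) : Matrix (Vtx D) (Vtx D) ℂ :=
  Polynomial.aeval (adjMat D)
    (∏ j ∈ (Finset.range (D + 1)).erase i,
      Polynomial.C ((theta D i - theta D j)⁻¹) * (Polynomial.X - Polynomial.C (theta D j)))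

/-- The `i`-th dual idempotent `E*_i`: diagonal with `(y,y)`-entry `1` if `wt(y) = i`. -/
def EstarMat (D i : ℕ) : Matrix (Vtx D) (Vtx D) ℂ :=
  Matrix.diagonal fun y => if wt y = i then 1 else 0

/-- The `i`-th imaginary idempotent `Eᵉ_i = P⁻¹ E_i P`. -/
def EepsMat (D i : ℕ) : Matrix (Vtx D) (Vtx D) ℂ :=
  (Pmat D)⁻¹ * Emat D i * Pmat D

/-- `W` is a `T`-module: a subspace of `ℂ^X` invariant under `A` and `A*`. -/
def IsTMod (D : ℕ) (W : Submodule ℂ (Vtx D → ℂ)) : Prop :=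
  (∀ w ∈ W, (adjMat D).mulVec w ∈ W) ∧ (∀ w ∈ W, (dualAdjMat D).mulVec w ∈ W)

/-- `W` is an irreducible `T`-module. -/
def IsIrredTMod (D : ℕ) (W : Submodule ℂ (Vtx D → ℂ)) : Prop :=
  IsTMod D W ∧ W ≠ ⊥ ∧
    ∀ U : Submodule ℂ (Vtx D → ℂ), IsTMod D U → U ≤ W → U = ⊥ ∨ U = W

/-- The Hermitian inner product `⟨u,v⟩ = uᵗ · conj v` (linear in the first argument). -/
def inp {D : ℕ} (u v : Vtx D → ℂ) : ℂ := ∑ y, u y * (starRingEnd ℂ) (v y)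


/-! ### Auxiliary machinery -/

-- inverse Kronecker factor
def Q1 : Bool → Bool → ℂ
  | false, false => 1/2
  | false, true  => Complex.I/2
  | true,  false => 1/2
  | true,  true  => -Complex.I/2

def Qmat (D : ℕ) : Matrix (Vtx D) (Vtx D) ℂ :=
  fun y z => ∏ k : Fin D, Q1 (y k) (z k)

lemma kron_mul {D : ℕ} (f g : Bool → Bool → ℂ) (y z : Vtx D) :
    (∑ w : Vtx D, (∏ k, f (y k) (w k)) * ∏ k, g (w k) (z k))
      = ∏ k, ∑ b, f (y k) b * g b (z k) := by
  rw [Finset.prod_univ_sum, Fintype.piFinset_univ]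
  exact Finset.sum_congr rfl fun w _ => by rw [← Finset.prod_mul_distrib]

lemma PQ_one (D : ℕ) : Pmat D * Qmat D = 1 := by
  ext y z
  simp only [Matrix.mul_apply, Pmat, Qmat]
  rw [kron_mul]
  by_cases hyz : y = z
  · subst hyz
    rw [Matrix.one_apply_eq]
    rw [Finset.prod_eq_one]
    intro k _
    cases y k <;> simp [P1, Q1, Fintype.sum_bool] <;> ring_nf <;>
      simp [Complex.I_sq] <;> ring
  · rw [Matrix.one_apply_ne hyz]
    obtain ⟨k, hk⟩ : ∃ k, y k ≠ z k := by
      by_contra hc; push_neg at hc; exact hyz (funext hc)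
    apply Finset.prod_eq_zero (Finset.mem_univ k)
    cases hy : y k <;> cases hz : z k <;> simp_all [P1, Q1, Fintype.sum_bool] <;>
      ring_nf <;> simp [Complex.I_sq] <;> ring

lemma QP_one (D : ℕ) : Qmat D * Pmat D = 1 := by
  ext y z
  simp only [Matrix.mul_apply, Pmat, Qmat]
  rw [kron_mul]
  by_cases hyz : y = z
  · subst hyz
    rw [Matrix.one_apply_eq]
    rw [Finset.prod_eq_one]
    intro k _
    cases y k <;> simp [P1, Q1, Fintype.sum_bool] <;> ring_nf <;>
      simp [Complex.I_sq] <;> ring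
  · rw [Matrix.one_apply_ne hyz]
    obtain ⟨k, hk⟩ : ∃ k, y k ≠ z k := by
      by_contra hc; push_neg at hc; exact hyz (funext hc)
    apply Finset.prod_eq_zero (Finset.mem_univ k)
    cases hy : y k <;> cases hz : z k <;> simp_all [P1, Q1, Fintype.sum_bool] <;>
      ring_nf <;> simp [Complex.I_sq] <;> ring

lemma Pinv (D : ℕ) : (Pmat D)⁻¹ = Qmat D := Matrix.inv_eq_right_inv (PQ_one D)

-- flip helper
def vflip {D : ℕ} (u : Vtx D) (k : Fin D) : Vtx D := Function.update u k (!(u k))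

lemma flip_apply_self {D : ℕ} (u : Vtx D) (k : Fin D) : vflip u k k = !(u k) := by
  simp [vflip]

lemma flip_apply_ne {D : ℕ} (u : Vtx D) {k l : Fin D} (h : l ≠ k) : vflip u k l = u l := by
  simp [vflip, Function.update_apply, h]

lemma diff_flip {D : ℕ} (u : Vtx D) (k : Fin D) :
    (Finset.univ.filter fun l => u l ≠ vflip u k l) = {k} := by
  ext l
  by_cases hl : l = k
  · subst hl; simp [flip_apply_self]
  · simp [hl, flip_apply_ne u hl]

lemma card_diff_one_iff {D : ℕ} (u w : Vtx D) :
    (Finset.univ.filter fun l => u l ≠ w l).card = 1 ↔ ∃ k, w = vflip u k := by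
  constructor
  · intro hc
    obtain ⟨k, hk⟩ := Finset.card_eq_one.mp hc
    refine ⟨k, funext fun l => ?_⟩
    by_cases hl : l = k
    · subst hl
      have : u l ≠ w l := by
        have : l ∈ (Finset.univ.filter fun l => u l ≠ w l) := hk ▸ Finset.mem_singleton_self l
        simpa using this
      rw [flip_apply_self]
      cases hw : w l <;> cases hu : u l <;> simp_all
    · have : l ∉ (Finset.univ.filter fun l => u l ≠ w l) := by
        rw [hk]; simpa using hl
      simp only [Finset.mem_filter, Finset.mem_univ, true_and, not_not] at this
      rw [flip_apply_ne u hl, ← this]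
  · rintro ⟨k, rfl⟩
    rw [diff_flip]; simp

lemma flip_injective {D : ℕ} (u : Vtx D) : Function.Injective (vflip u) := by
  intro k₁ k₂ hk
  by_contra hne
  have h1 : vflip u k₁ k₁ = !(u k₁) := flip_apply_self u k₁
  have h2 : vflip u k₂ k₁ = u k₁ := flip_apply_ne u (Ne.symm (by exact fun h => hne h.symm))
  rw [hk, h2] at h1
  cases u k₁ <;> simp_all

lemma sum_adj {D : ℕ} (u : Vtx D) (F : Vtx D → ℂ) :
    ∑ w, adjMat D u w * F w = ∑ k, F (vflip u k) := by
  unfold adjMat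
  simp only [ite_mul, one_mul, zero_mul]
  rw [Finset.sum_ite, Finset.sum_const_zero, add_zero]
  have himg : Finset.univ.filter (fun w => (Finset.univ.filter fun l => u l ≠ w l).card = 1)
      = Finset.univ.image (vflip u) := by
    ext w
    simp only [Finset.mem_filter, Finset.mem_univ, true_and, Finset.mem_image]
    rw [card_diff_one_iff]
    exact ⟨fun ⟨k, hk⟩ => ⟨k, hk.symm⟩, fun ⟨k, hk⟩ => ⟨k, hk.symm⟩⟩
  rw [himg, Finset.sum_image (fun k₁ _ k₂ _ h => flip_injective u h)]

lemma adj_symm {D : ℕ} (y z : Vtx D) : adjMat D y z = adjMat D z y := by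
  have hset : (Finset.univ.filter fun l => y l ≠ z l) = (Finset.univ.filter fun l => z l ≠ y l) := by
    ext l; simp [ne_comm]
  unfold adjMat
  rw [hset]

-- product manipulation
lemma prod_flip_right {D : ℕ} (y z : Vtx D) (k : Fin D) :
    ∏ l, P1 (y l) (vflip z k l) = (if y k = true then -1 else 1) * ∏ l, P1 (y l) (z l) := by
  rw [← Finset.mul_prod_erase Finset.univ (fun l => P1 (y l) (vflip z k l)) (Finset.mem_univ k),
      ← Finset.mul_prod_erase Finset.univ (fun l => P1 (y l) (z l)) (Finset.mem_univ k),
      Finset.prod_congr rfl (fun l hl => by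
        rw [flip_apply_ne z (Finset.ne_of_mem_erase hl)])]
  rw [flip_apply_self, ← mul_assoc]
  congr 1
  cases hy : y k <;> cases hz : z k <;> simp [P1]

lemma prod_flip_left {D : ℕ} (y z : Vtx D) (k : Fin D) :
    ∏ l, P1 (vflip y k l) (z l) =
      ((if y k = true then -1 else 1) * (if z k = true then Complex.I else -Complex.I))
        * ∏ l, P1 (y l) (z l) := by
  rw [← Finset.mul_prod_erase Finset.univ (fun l => P1 (vflip y k l) (z l)) (Finset.mem_univ k),
      ← Finset.mul_prod_erase Finset.univ (fun l => P1 (y l) (z l)) (Finset.mem_univ k),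
      Finset.prod_congr rfl (fun l hl => by
        rw [flip_apply_ne y (Finset.ne_of_mem_erase hl)])]
  rw [flip_apply_self, ← mul_assoc]
  congr 1
  cases hy : y k <;> cases hz : z k <;> simp [P1] <;> ring_nf <;> simp [Complex.I_sq] <;> ring

lemma sum_sign {D : ℕ} (y : Vtx D) :
    ∑ k, (if y k = true then (-1 : ℂ) else 1) = (D : ℂ) - 2 * (wt y : ℂ) := by
  have he : ∀ k, (if y k = true then (-1 : ℂ) else 1)
      = 1 - 2 * (if y k = true then (1 : ℂ) else 0) := by
    intro k; cases y k <;> norm_num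
  simp_rw [he]
  rw [Finset.sum_sub_distrib, Finset.sum_const, ← Finset.mul_sum, Finset.sum_boole]
  simp [wt]

-- weight of flip
lemma wt_update_true {D : ℕ} (z : Vtx D) (k : Fin D) (h : z k = false) :
    wt (Function.update z k true) = wt z + 1 := by
  unfold wt
  have : (Finset.univ.filter fun l => Function.update z k true l = true)
      = insert k (Finset.univ.filter fun l => z l = true) := by
    ext l
    by_cases hl : l = k
    · subst hl; simp [Function.update_self]
    · simp [Function.update_apply, hl]
  rw [this, Finset.card_insert_of_notMem (by simp [h])]

lemma wt_vflip_false {D : ℕ} (y : Vtx D) (k : Fin D) (h : y k = false) :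
    wt (vflip y k) = wt y + 1 := by
  have h1 : vflip y k = Function.update y k true := by simp [vflip, h]
  rw [h1, wt_update_true y k h]

lemma wt_vflip_true {D : ℕ} (y : Vtx D) (k : Fin D) (hy : y k = true) :
    wt y = wt (vflip y k) + 1 := by
  have h2 : Function.update (vflip y k) k true = y := by
    funext l
    by_cases hl : l = k
    · subst hl; simp [Function.update_self, hy]
    · simp [Function.update_apply, hl, flip_apply_ne y hl]
  have h3 : vflip y k k = false := by rw [flip_apply_self, hy]; rfl
  have h4 := wt_update_true (vflip y k) k h3
  rw [h2] at h4
  exact h4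

lemma wt_flip_cast {D : ℕ} (y : Vtx D) (k : Fin D) :
    (wt (vflip y k) : ℂ) = (wt y : ℂ) + (if y k = true then -1 else 1) := by
  cases hy : y k
  · rw [wt_vflip_false y k hy]
    push_cast; norm_num
  · rw [wt_vflip_true y k hy]; push_cast; norm_num

lemma imagAdjMat_apply {D : ℕ} (y z : Vtx D) :
    imagAdjMat D y z = -Complex.I * ((wt y : ℂ) - (wt z : ℂ)) * adjMat D y z := by
  simp only [imagAdjMat, Matrix.smul_apply, Matrix.sub_apply, dualAdjMat,
    Matrix.mul_diagonal, Matrix.diagonal_mul, smul_eq_mul]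
  ring

-- the three intertwining identities
lemma PA_eq (D : ℕ) : Pmat D * adjMat D = dualAdjMat D * Pmat D := by
  ext y z
  rw [Matrix.mul_apply]
  have hterm : ∀ w, Pmat D y w * adjMat D w z = adjMat D z w * Pmat D y w := by
    intro w; rw [adj_symm w z, mul_comm]
  simp_rw [hterm]
  rw [sum_adj z (fun w => Pmat D y w)]
  simp only [Pmat]
  simp_rw [prod_flip_right y z]
  rw [← Finset.sum_mul, sum_sign y]
  rw [dualAdjMat, Matrix.diagonal_mul]
  rfl

lemma AP_eq (D : ℕ) : adjMat D * Pmat D = Pmat D * imagAdjMat D := by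
  ext y z
  rw [Matrix.mul_apply, Matrix.mul_apply]
  rw [sum_adj y (fun w => Pmat D w z)]
  have hterm : ∀ w, Pmat D y w * imagAdjMat D w z
      = adjMat D z w * (-Complex.I * ((wt w : ℂ) - (wt z : ℂ)) * Pmat D y w) := by
    intro w; rw [imagAdjMat_apply, adj_symm w z]; ring
  simp_rw [hterm]
  rw [sum_adj z (fun w => -Complex.I * ((wt w : ℂ) - (wt z : ℂ)) * Pmat D y w)]
  refine Finset.sum_congr rfl fun k _ => ?_
  simp only [Pmat]
  rw [prod_flip_left y z k, wt_flip_cast z k, prod_flip_right y z k]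
  cases hy : y k <;> cases hz : z k <;> simp <;> ring_nf <;> simp [Complex.I_sq]

lemma PS_eq (D : ℕ) : Pmat D * dualAdjMat D = imagAdjMat D * Pmat D := by
  ext y z
  rw [dualAdjMat, Matrix.mul_diagonal, Matrix.mul_apply]
  have hterm : ∀ w, imagAdjMat D y w * Pmat D w z
      = adjMat D y w * (-Complex.I * ((wt y : ℂ) - (wt w : ℂ)) * Pmat D w z) := by
    intro w; rw [imagAdjMat_apply]; ring
  simp_rw [hterm]
  rw [sum_adj y (fun w => -Complex.I * ((wt y : ℂ) - (wt w : ℂ)) * Pmat D w z)]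
  have : ∀ k, -Complex.I * ((wt y : ℂ) - (wt (vflip y k) : ℂ)) * Pmat D (vflip y k) z
      = (if z k = true then (-1 : ℂ) else 1) * Pmat D y z := by
    intro k
    simp only [Pmat]
    rw [prod_flip_left y z k, wt_flip_cast y k]
    cases hy : y k <;> cases hz : z k <;> simp <;> ring_nf <;> simp [Complex.I_sq]
  simp_rw [this]
  rw [← Finset.sum_mul, sum_sign z]
  ring

-- Lagrange polynomials and dual idempotents
def pLag (D h : ℕ) : Polynomial ℂ :=
  ∏ j ∈ (Finset.range (D + 1)).erase h,
    Polynomial.C ((theta D h - theta D j)⁻¹) * (Polynomial.X - Polynomial.C (theta D j))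

lemma theta_sub_ne {D h j : ℕ} (hne : h ≠ j) : theta D h - theta D j ≠ 0 := by
  unfold theta
  intro hc
  apply hne
  have : (h : ℂ) = (j : ℂ) := by linear_combination -hc / 2
  exact_mod_cast this

lemma pLag_eval {D h i : ℕ} (hh : h ≤ D) (hi : i ≤ D) :
    (pLag D h).eval (theta D i) = if i = h then 1 else 0 := by
  unfold pLag
  rw [Polynomial.eval_prod]
  by_cases hih : i = h
  · subst hih
    rw [if_pos rfl]
    apply Finset.prod_eq_one
    intro j hj
    have hji : j ≠ i := (Finset.mem_erase.mp hj).1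
    simp only [Polynomial.eval_mul, Polynomial.eval_C, Polynomial.eval_sub, Polynomial.eval_X]
    exact inv_mul_cancel₀ (theta_sub_ne (Ne.symm hji))
  · rw [if_neg hih]
    apply Finset.prod_eq_zero
      (Finset.mem_erase.mpr ⟨hih, Finset.mem_range.mpr (Nat.lt_succ_of_le hi)⟩)
    simp

lemma wt_le {D : ℕ} (y : Vtx D) : wt y ≤ D := by
  unfold wt
  calc (Finset.univ.filter fun k => y k = true).card ≤ Finset.univ.card :=
        Finset.card_filter_le _ _
    _ = D := by simp

lemma aeval_diagonal {D : ℕ} (d : Vtx D → ℂ) (p : Polynomial ℂ) :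
    Polynomial.aeval (Matrix.diagonal d) p = Matrix.diagonal (fun y => p.eval (d y)) := by
  have hfun : Polynomial.aeval d p = fun y => p.eval (d y) := by
    funext y
    have h2 := Polynomial.aeval_algHom_apply (Pi.evalAlgHom ℂ (fun _ : Vtx D => ℂ) y) d p
    have h3 : (Pi.evalAlgHom ℂ (fun _ : Vtx D => ℂ) y) (Polynomial.aeval d p)
        = (Polynomial.aeval d p) y := rfl
    rw [h3] at h2
    rw [← h2]
    have h4 : (Pi.evalAlgHom ℂ (fun _ : Vtx D => ℂ) y) d = d y := rfl
    rw [h4, ← Polynomial.coe_aeval_eq_eval]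
  have h1 := Polynomial.aeval_algHom_apply
    (Matrix.diagonalAlgHom (n := Vtx D) (α := ℂ) ℂ) d p
  simp only [Matrix.diagonalAlgHom_apply] at h1
  rw [h1, hfun]

lemma EstarMat_eq {D h : ℕ} (hh : h ≤ D) :
    Polynomial.aeval (dualAdjMat D) (pLag D h) = EstarMat D h := by
  have hfun : (fun y : Vtx D => Polynomial.eval ((D : ℂ) - 2 * (wt y : ℂ)) (pLag D h))
      = fun y : Vtx D => if wt y = h then (1 : ℂ) else 0 := by
    funext y
    have h2 : (D : ℂ) - 2 * (wt y : ℂ) = theta D (wt y) := rfl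
    rw [h2, pLag_eval hh (wt_le y)]
  rw [dualAdjMat, aeval_diagonal, hfun, EstarMat]

lemma card_filter_val_lt {D m : ℕ} (hm : m ≤ D) :
    ((Finset.univ : Finset (Fin D)).filter fun k => k.val < m).card = m := by
  have key : ((Finset.univ : Finset (Fin D)).filter fun k => k.val < m).card
      = (Finset.range m).card := by
    refine Finset.card_bij' (fun k _ => (k : ℕ))
      (fun i hi => (⟨i, lt_of_lt_of_le (Finset.mem_range.mp hi) hm⟩ : Fin D)) ?_ ?_ ?_ ?_
    · intro k hk
      exact Finset.mem_range.mpr (Finset.mem_filter.mp hk).2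
    · intro i hi
      simp [Finset.mem_range.mp hi]
    · intro k hk; rfl
    · intro i hi; rfl
  rw [key, Finset.card_range]

-- conjugation lemmas
lemma hcPow {n : Type*} [Fintype n] [DecidableEq n] (P Q M : Matrix n n ℂ)
    (hQP : Q * P = 1) (k : ℕ) : (Q * M * P) ^ k = Q * M ^ k * P := by
  induction k with
  | zero => rw [pow_zero, pow_zero, mul_one, hQP]
  | succ k ih =>
      rw [pow_succ, pow_succ, ih]
      calc Q * M ^ k * P * (Q * M * P) = Q * M ^ k * ((P * Q) * (M * P)) := by noncomm_ring
        _ = Q * (M ^ k * M) * P := by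
            rw [mul_eq_one_comm.mp hQP, one_mul]; noncomm_ring

lemma hcAeval {n : Type*} [Fintype n] [DecidableEq n] (P Q M : Matrix n n ℂ)
    (hQP : Q * P = 1) (p : Polynomial ℂ) :
    Polynomial.aeval (Q * M * P) p = Q * Polynomial.aeval M p * P := by
  induction p using Polynomial.induction_on' with
  | add p q hp hq => rw [map_add, map_add, hp, hq]; noncomm_ring
  | monomial k a =>
      rw [Polynomial.aeval_monomial, Polynomial.aeval_monomial, hcPow P Q M hQP,
        Algebra.algebraMap_eq_smul_one]
      calc (a • (1 : Matrix n n ℂ)) * (Q * M ^ k * P) = a • (Q * M ^ k * P) := by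
            rw [smul_mul_assoc, one_mul]
        _ = Q * ((a • (1 : Matrix n n ℂ)) * M ^ k) * P := by
            rw [smul_mul_assoc, one_mul, Matrix.mul_smul, Matrix.smul_mul]

lemma hcMul {n : Type*} [Fintype n] [DecidableEq n] (P Q M N : Matrix n n ℂ)
    (hPQ : P * Q = 1) : Q * (M * N) * P = (Q * M * P) * (Q * N * P) := by
  symm
  calc (Q * M * P) * (Q * N * P) = Q * M * (P * Q) * N * P := by noncomm_ring
    _ = Q * (M * N) * P := by rw [hPQ, mul_one]; noncomm_ring

lemma hcZero {n : Type*} [Fintype n] [DecidableEq n] (P Q M : Matrix n n ℂ)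
    (hPQ : P * Q = 1) : Q * M * P = 0 ↔ M = 0 := by
  constructor
  · intro h0
    have h2 : P * (Q * M * P) * Q = M := by
      calc P * (Q * M * P) * Q = (P * Q) * M * (P * Q) := by noncomm_ring
        _ = M := by rw [hPQ, one_mul, mul_one]
    rw [← h2, h0, mul_zero, zero_mul]
  · intro h0; rw [h0, mul_zero, zero_mul]

-- combinatorial core
lemma adj_wt {D : ℕ} {y z : Vtx D} (hadj : adjMat D y z ≠ 0) :
    wt y + 1 = wt z ∨ wt z + 1 = wt y := by
  have hc : (Finset.univ.filter fun k => y k ≠ z k).card = 1 := by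
    by_contra hc
    apply hadj
    unfold adjMat
    rw [if_neg hc]
  obtain ⟨k, rfl⟩ := (card_diff_one_iff y z).mp hc
  cases hyk : y k
  · left; rw [wt_vflip_false y k hyk]
  · right; rw [← wt_vflip_true y k hyk]

lemma wt_init {D m : ℕ} (hm : m ≤ D) :
    wt (fun k : Fin D => decide (k.val < m)) = m := by
  unfold wt
  simp only [decide_eq_true_eq]
  exact card_filter_val_lt hm

lemma adj_init {D m : ℕ} (hm : m + 1 ≤ D) :
    adjMat D (fun k : Fin D => decide (k.val < m)) (fun k : Fin D => decide (k.val < m + 1))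
      = 1 := by
  unfold adjMat
  rw [if_pos]
  have hcond : ∀ k : Fin D,
      ((decide (k.val < m) : Bool) ≠ decide (k.val < m + 1)) ↔ k = (⟨m, hm⟩ : Fin D) := by
    intro k
    simp only [ne_eq, decide_eq_decide, Fin.ext_iff]
    omega
  rw [Finset.filter_congr (fun k _ => by rw [hcond k]), Finset.filter_eq',
    if_pos (Finset.mem_univ _), Finset.card_singleton]

lemma sandwich_zero_iff {D h j : ℕ} (M : Matrix (Vtx D) (Vtx D) ℂ) :
    EstarMat D h * M * EstarMat D j = 0 ↔
      ∀ y z : Vtx D, wt y = h → wt z = j → M y z = 0 := by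
  have happly : ∀ y z : Vtx D, (EstarMat D h * M * EstarMat D j) y z
      = (if wt y = h then (1:ℂ) else 0) * M y z * (if wt z = j then (1:ℂ) else 0) := by
    intro y z
    rw [EstarMat, EstarMat, Matrix.mul_diagonal, Matrix.diagonal_mul]
  constructor
  · intro h0 y z hy hz
    have hz0 : (EstarMat D h * M * EstarMat D j) y z = 0 := by rw [h0]; rfl
    rw [happly, hy, hz, if_pos rfl, if_pos rfl, one_mul, mul_one] at hz0
    exact hz0
  · intro hf
    ext y z
    rw [Matrix.zero_apply, happly]
    by_cases hy : wt y = h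
    · by_cases hz : wt z = j
      · rw [hf y z hy hz]; ring
      · rw [if_neg hz]; ring
    · rw [if_neg hy]; ring

lemma L_A {D h j : ℕ} (hh : h ≤ D) (hj : j ≤ D) :
    ((h : ℤ) - (j : ℤ)).natAbs ≠ 1 ↔
      EstarMat D h * adjMat D * EstarMat D j = 0 := by
  rw [sandwich_zero_iff]
  constructor
  · intro hne y z hy hz
    by_contra hA
    rcases adj_wt hA with h1 | h1 <;> omega
  · intro hall hone
    have hcase : j = h + 1 ∨ h = j + 1 := by omega
    rcases hcase with hc | hc
    · subst hc
      have h0 := hall (fun k : Fin D => decide (k.val < h)) (fun k : Fin D => decide (k.val < h + 1))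
        (wt_init (by omega)) (wt_init hj)
      rw [adj_init (by omega)] at h0
      exact one_ne_zero h0
    · subst hc
      have h0 := hall (fun k : Fin D => decide (k.val < j + 1)) (fun k : Fin D => decide (k.val < j))
        (wt_init hh) (wt_init (by omega))
      rw [adj_symm, adj_init (by omega)] at h0
      exact one_ne_zero h0

lemma L_Ae {D h j : ℕ} (hh : h ≤ D) (hj : j ≤ D) :
    ((h : ℤ) - (j : ℤ)).natAbs ≠ 1 ↔
      EstarMat D h * imagAdjMat D * EstarMat D j = 0 := by
  rw [sandwich_zero_iff]
  constructor
  · intro hne y z hy hz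
    rw [imagAdjMat_apply]
    have hA : adjMat D y z = 0 := by
      by_contra hA
      rcases adj_wt hA with h1 | h1 <;> omega
    rw [hA, mul_zero]
  · intro hall hone
    have hcase : j = h + 1 ∨ h = j + 1 := by omega
    have hhj : h ≠ j := by omega
    have hval : -Complex.I * ((h : ℂ) - (j : ℂ)) ≠ 0 := by
      apply mul_ne_zero
      · simpa using Complex.I_ne_zero
      · rw [sub_ne_zero]
        exact fun hc => hhj (by exact_mod_cast hc)
    rcases hcase with hc | hc
    · subst hc
      have h0 := hall (fun k : Fin D => decide (k.val < h)) (fun k : Fin D => decide (k.val < h + 1))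
        (wt_init (by omega)) (wt_init hj)
      rw [imagAdjMat_apply, adj_init (by omega), mul_one,
        wt_init (show h ≤ D by omega), wt_init hj] at h0
      exact hval h0
    · subst hc
      have h0 := hall (fun k : Fin D => decide (k.val < j + 1)) (fun k : Fin D => decide (k.val < j))
        (wt_init hh) (wt_init (by omega))
      rw [imagAdjMat_apply, adj_symm, adj_init (by omega), mul_one,
        wt_init hh, wt_init (show j ≤ D by omega)] at h0
      exact hval h0

/-- For `0 ≤ h, j ≤ D` the following are equivalent: (i) `|h - j| ≠ 1`;
(ii) `E_h Aᵉ E_j = 0`; (iii) `E*_h Aᵉ E*_j = 0`; (iv) `Eᵉ_h A Eᵉ_j = 0`;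
(v) `Eᵉ_h A* Eᵉ_j = 0`. -/
theorem vanishing_equivalences (D : ℕ) (hD : 0 < D) (h j : ℕ) (hh : h ≤ D) (hj : j ≤ D) :
    (((h : ℤ) - (j : ℤ)).natAbs ≠ 1 ↔ Emat D h * imagAdjMat D * Emat D j = 0) ∧
    (((h : ℤ) - (j : ℤ)).natAbs ≠ 1 ↔ EstarMat D h * imagAdjMat D * EstarMat D j = 0) ∧
    (((h : ℤ) - (j : ℤ)).natAbs ≠ 1 ↔ EepsMat D h * adjMat D * EepsMat D j = 0) ∧
    (((h : ℤ) - (j : ℤ)).natAbs ≠ 1 ↔ EepsMat D h * dualAdjMat D * EepsMat D j = 0) := by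
  have hPQ := PQ_one D
  have hQP := QP_one D
  have psi3 : ∀ M N K : Matrix (Vtx D) (Vtx D) ℂ,
      Qmat D * (M * N * K) * Pmat D
        = (Qmat D * M * Pmat D) * (Qmat D * N * Pmat D) * (Qmat D * K * Pmat D) := by
    intro M N K
    rw [hcMul (Pmat D) (Qmat D) (M * N) K hPQ, hcMul (Pmat D) (Qmat D) M N hPQ]
  have hQAP : Qmat D * adjMat D * Pmat D = imagAdjMat D := by
    rw [mul_assoc, AP_eq, ← mul_assoc, hQP, one_mul]
  have hQAeP : Qmat D * imagAdjMat D * Pmat D = dualAdjMat D := by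
    rw [mul_assoc, ← PS_eq, ← mul_assoc, hQP, one_mul]
  have hQSP : Qmat D * dualAdjMat D * Pmat D = adjMat D := by
    rw [mul_assoc, ← PA_eq, ← mul_assoc, hQP, one_mul]
  have hE : ∀ i, Emat D i = Polynomial.aeval (adjMat D) (pLag D i) := fun i => rfl
  have hQEP : ∀ i, Qmat D * Emat D i * Pmat D = Polynomial.aeval (imagAdjMat D) (pLag D i) := by
    intro i
    rw [hE, ← hcAeval (Pmat D) (Qmat D) (adjMat D) hQP, hQAP]
  have hQEpsP : ∀ i, Qmat D * Polynomial.aeval (imagAdjMat D) (pLag D i) * Pmat D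
      = Polynomial.aeval (dualAdjMat D) (pLag D i) := by
    intro i
    rw [← hcAeval (Pmat D) (Qmat D) (imagAdjMat D) hQP, hQAeP]
  have hEe : ∀ i, EepsMat D i = Polynomial.aeval (imagAdjMat D) (pLag D i) := by
    intro i
    rw [EepsMat, Pinv D]
    exact hQEP i
  -- (ii)
  have s1 : Qmat D * (Emat D h * imagAdjMat D * Emat D j) * Pmat D
      = Polynomial.aeval (imagAdjMat D) (pLag D h) * dualAdjMat D
        * Polynomial.aeval (imagAdjMat D) (pLag D j) := by
    rw [psi3, hQEP, hQAeP, hQEP]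
  have s2 : Qmat D * (Polynomial.aeval (imagAdjMat D) (pLag D h) * dualAdjMat D
        * Polynomial.aeval (imagAdjMat D) (pLag D j)) * Pmat D
      = EstarMat D h * adjMat D * EstarMat D j := by
    rw [psi3, hQEpsP, hQSP, hQEpsP, EstarMat_eq hh, EstarMat_eq hj]
  have t2 : Emat D h * imagAdjMat D * Emat D j = 0 ↔
      EstarMat D h * adjMat D * EstarMat D j = 0 := by
    rw [← hcZero (Pmat D) (Qmat D) (Emat D h * imagAdjMat D * Emat D j) hPQ, s1,
      ← hcZero (Pmat D) (Qmat D) _ hPQ, s2]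
  -- (iv)
  have s4 : Qmat D * (EepsMat D h * adjMat D * EepsMat D j) * Pmat D
      = EstarMat D h * imagAdjMat D * EstarMat D j := by
    rw [hEe, hEe, psi3, hQEpsP, hQAP, hQEpsP, EstarMat_eq hh, EstarMat_eq hj]
  have t4 : EepsMat D h * adjMat D * EepsMat D j = 0 ↔
      EstarMat D h * imagAdjMat D * EstarMat D j = 0 := by
    rw [← hcZero (Pmat D) (Qmat D) (EepsMat D h * adjMat D * EepsMat D j) hPQ, s4]
  -- (v)
  have s5 : Qmat D * (EepsMat D h * dualAdjMat D * EepsMat D j) * Pmat D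
      = EstarMat D h * adjMat D * EstarMat D j := by
    rw [hEe, hEe, psi3, hQEpsP, hQSP, hQEpsP, EstarMat_eq hh, EstarMat_eq hj]
  have t5 : EepsMat D h * dualAdjMat D * EepsMat D j = 0 ↔
      EstarMat D h * adjMat D * EstarMat D j = 0 := by
    rw [← hcZero (Pmat D) (Qmat D) (EepsMat D h * dualAdjMat D * EepsMat D j) hPQ, s5]
  exact ⟨(L_A hh hj).trans t2.symm, L_Ae hh hj,
    (L_Ae hh hj).trans t4.symm, (L_A hh hj).trans t5.symm⟩
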